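/- arXiv:0706.4045 — 2 statements merged into one kernel-verified Lean document; each statement's English description precedes it below -/
import Mathlib

section
/- Let (X, μ) be a finite measure space and let p₁, p₂ : X → ℝ be measurable exponent functions with 1 ≤ p₂(x) ≤ p₁(x) ≤ P < ∞ for μ-almost every x, where P is a real constant. Then there exists a constant C > 0 such that for every measurable function f : X → ℝ, |f|_{p₂(·)} ≤ C · |f|_{p₁(·)}. -/
open MeasureTheory ENNReal

/-- The Luxemburg norm `|f|_{p(·)} = inf { λ > 0 : ∫_X |f(x)/λ|^{p(x)} dμ ≤ 1 }`,
    with `inf ∅ = ∞`, as a value in `[0,∞]`. -/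
noncomputable def luxNorm {X : Type*} [MeasurableSpace X] (μ : Measure X)
    (p : X → ℝ) (u : X → ℝ) : ℝ≥0∞ :=
  sInf {l : ℝ≥0∞ | ∃ m : ℝ, 0 < m ∧ l = ENNReal.ofReal m ∧
    ∫⁻ x, ENNReal.ofReal (|u x / m| ^ p x) ∂μ ≤ 1}

/-- Pointwise inequality: for `t ≥ 0`, `K ≥ 1`, `1 ≤ q ≤ r`, we have
    `(t/K)^q ≤ (1 + t^r) / K`. -/
lemma lux_pointwise {t K q r : ℝ} (ht : 0 ≤ t) (hK : 1 ≤ K) (hq : 1 ≤ q) (hqr : q ≤ r) :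
    (t / K) ^ q ≤ (1 + t ^ r) / K := by
  have hK0 : 0 < K := lt_of_lt_of_le one_pos hK
  have h1 : (t / K) ^ q = t ^ q / K ^ q := Real.div_rpow ht (le_of_lt hK0) q
  have h2 : K ≤ K ^ q := by
    have := Real.rpow_le_rpow_of_exponent_le hK hq
    rwa [Real.rpow_one] at this
  have htq : 0 ≤ t ^ q := Real.rpow_nonneg ht q
  have h4 : t ^ q ≤ 1 + t ^ r := by
    rcases le_or_gt t 1 with h | h
    · have h5 : t ^ q ≤ 1 := Real.rpow_le_one ht h (by linarith)
      have h6 : (0:ℝ) ≤ t ^ r := Real.rpow_nonneg ht r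
      linarith
    · have : t ^ q ≤ t ^ r := Real.rpow_le_rpow_of_exponent_le (le_of_lt h) hqr
      linarith
  calc (t / K) ^ q = t ^ q / K ^ q := h1
    _ ≤ t ^ q / K := by gcongr
    _ ≤ (1 + t ^ r) / K := by gcongr

/-- On a finite measure space, if `1 ≤ p₂(x) ≤ p₁(x) ≤ P < ∞` a.e., then there is
    `C > 0` such that `|f|_{p₂(·)} ≤ C |f|_{p₁(·)}` for every measurable `f`. -/
theorem stmt14 {X : Type*} [MeasurableSpace X] (μ : Measure X) [IsFiniteMeasure μ]
    (p₁ p₂ : X → ℝ) (hp₁ : Measurable p₁) (hp₂ : Measurable p₂) (P : ℝ)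
    (hb : ∀ᵐ x ∂μ, 1 ≤ p₂ x ∧ p₂ x ≤ p₁ x ∧ p₁ x ≤ P) :
    ∃ C : ℝ, 0 < C ∧ ∀ f : X → ℝ, Measurable f →
      luxNorm μ p₂ f ≤ ENNReal.ofReal C * luxNorm μ p₁ f := by
  set K : ℝ := (μ Set.univ).toReal + 1 with hKdef
  have hK1 : 1 ≤ K := by
    have h := ENNReal.toReal_nonneg (a := μ Set.univ)
    simp only [hKdef, le_add_iff_nonneg_left]
    exact h
  have hK0 : 0 < K := lt_of_lt_of_le one_pos hK1
  refine ⟨K, hK0, fun f hf => ?_⟩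
  -- Key step: for every `m` in the defining set for `p₁`, `K*m` is in the set for `p₂`.
  have key : ∀ m : ℝ, 0 < m →
      (∫⁻ x, ENNReal.ofReal (|f x / m| ^ p₁ x) ∂μ) ≤ 1 →
      luxNorm μ p₂ f ≤ ENNReal.ofReal (K * m) := by
    intro m hm hint
    apply sInf_le
    refine ⟨K * m, by positivity, rfl, ?_⟩
    have hpt : ∀ᵐ x ∂μ, ENNReal.ofReal (|f x / (K * m)| ^ p₂ x) ≤
        ENNReal.ofReal (1 / K) * (1 + ENNReal.ofReal (|f x / m| ^ p₁ x)) := by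
      filter_upwards [hb] with x ⟨h1, h2, _⟩
      have habs : |f x / (K * m)| = |f x / m| / K := by
        rw [mul_comm, ← div_div, abs_div, abs_of_pos hK0]
      rw [habs]
      calc ENNReal.ofReal ((|f x / m| / K) ^ p₂ x)
          ≤ ENNReal.ofReal ((1 + |f x / m| ^ p₁ x) / K) :=
            ENNReal.ofReal_le_ofReal (lux_pointwise (abs_nonneg _) hK1 h1 h2)
        _ = ENNReal.ofReal (1 / K) * (1 + ENNReal.ofReal (|f x / m| ^ p₁ x)) := by
            rw [div_eq_mul_inv, ENNReal.ofReal_mul' (by positivity),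
              ENNReal.ofReal_add (by norm_num) (Real.rpow_nonneg (abs_nonneg _) _)]
            rw [one_div, mul_comm]
            simp
    have hmeas : Measurable fun x => ENNReal.ofReal (|f x / m| ^ p₁ x) :=
      (((hf.div_const m).abs.pow hp₁).ennreal_ofReal)
    calc ∫⁻ x, ENNReal.ofReal (|f x / (K * m)| ^ p₂ x) ∂μ
        ≤ ∫⁻ x, ENNReal.ofReal (1 / K) * (1 + ENNReal.ofReal (|f x / m| ^ p₁ x)) ∂μ :=
          lintegral_mono_ae hpt
      _ = ENNReal.ofReal (1 / K) * ∫⁻ x, (1 + ENNReal.ofReal (|f x / m| ^ p₁ x)) ∂μ := by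
          rw [lintegral_const_mul _ (by exact measurable_const.add hmeas :
            Measurable fun x => 1 + ENNReal.ofReal (|f x / m| ^ p₁ x))]
      _ = ENNReal.ofReal (1 / K) *
            (μ Set.univ + ∫⁻ x, ENNReal.ofReal (|f x / m| ^ p₁ x) ∂μ) := by
          rw [lintegral_add_left measurable_const, lintegral_one]
      _ ≤ ENNReal.ofReal (1 / K) * (μ Set.univ + 1) := by gcongr
      _ = 1 := by
          have hμ : μ Set.univ + 1 = ENNReal.ofReal K := by
            rw [hKdef, ENNReal.ofReal_add ENNReal.toReal_nonneg zero_le_one,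
              ENNReal.ofReal_toReal (measure_ne_top μ _), ENNReal.ofReal_one]
          rw [hμ, ← ENNReal.ofReal_mul (by positivity), one_div,
            inv_mul_cancel₀ (ne_of_gt hK0), ENNReal.ofReal_one]
  -- Conclude by taking the infimum.
  have hKne : ENNReal.ofReal K ≠ 0 := by
    simp [ENNReal.ofReal_eq_zero, not_le, hK0]
  rw [mul_comm, ← ENNReal.div_le_iff_le_mul (Or.inl hKne) (Or.inl ENNReal.ofReal_ne_top)]
  apply le_sInf
  rintro l ⟨m, hm, rfl, hint⟩
  rw [ENNReal.div_le_iff_le_mul (Or.inl hKne) (Or.inl ENNReal.ofReal_ne_top)]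
  calc luxNorm μ p₂ f ≤ ENNReal.ofReal (K * m) := key m hm hint
    _ = ENNReal.ofReal m * ENNReal.ofReal K := by
        rw [ENNReal.ofReal_mul hK0.le, mul_comm]
end

section
/- Let Ω be a bounded open subset of ℝ^N (N ≥ 3) and let p₁, p₂, q : closure(Ω) → ℝ be continuous functions satisfying 1 < p₂(x) < q⁻ ≤ q⁺ < p₁(x) < N for all x ∈ closure(Ω), where q⁻ = min_{closure(Ω)} q and q⁺ = max_{closure(Ω)} q. Let λ₀ := inf { (∫_Ω (|Du|^{p₁(x)} + |Du|^{p₂(x)}) dx) / (∫_Ω |u|^{q(x)} dx) : u of class C¹ with compact support contained in Ω, u not identically zero }. Then for every λ with 0 < λ < λ₀ there is no function u : ℝ^N → ℝ of class C¹, not identically zero, with compact support contained in Ω, such that ∫_Ω (|Du(x)|^{p₁(x)−2} + |Du(x)|^{p₂(x)−2}) ⟨Du(x), Dv(x)⟩ dx = λ ∫_Ω |u(x)|^{q(x)−2} u(x) v(x) dx holds for every function v : ℝ^N → ℝ of class C¹ with compact support contained in Ω. -/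
open MeasureTheory ENNReal

/-- `J₁(u) = ∫_Ω (|Du|^{p₁(x)} + |Du|^{p₂(x)}) dx`, with `Du` the gradient of `u`. -/
noncomputable def Jone (N : ℕ) (Ω : Set (EuclideanSpace ℝ (Fin N)))
    (p₁ p₂ : EuclideanSpace ℝ (Fin N) → ℝ) (u : EuclideanSpace ℝ (Fin N) → ℝ) : ℝ≥0∞ :=
  ∫⁻ x in Ω, (ENNReal.ofReal (‖gradient u x‖ ^ p₁ x) +
    ENNReal.ofReal (‖gradient u x‖ ^ p₂ x))

/-- `I₁(u) = ∫_Ω |u|^{q(x)} dx`. -/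
noncomputable def Ione (N : ℕ) (Ω : Set (EuclideanSpace ℝ (Fin N)))
    (q : EuclideanSpace ℝ (Fin N) → ℝ) (u : EuclideanSpace ℝ (Fin N) → ℝ) : ℝ≥0∞ :=
  ∫⁻ x in Ω, ENNReal.ofReal (|u x| ^ q x)

/-- `λ₀ = inf { J₁(u)/I₁(u) : u ∈ C¹, compact support in Ω, u ≢ 0 }`. -/
noncomputable def lambdaZero (N : ℕ) (Ω : Set (EuclideanSpace ℝ (Fin N)))
    (p₁ p₂ q : EuclideanSpace ℝ (Fin N) → ℝ) : ℝ≥0∞ :=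
  sInf {r : ℝ≥0∞ | ∃ u : EuclideanSpace ℝ (Fin N) → ℝ,
    ContDiff ℝ 1 u ∧ HasCompactSupport u ∧ tsupport u ⊆ Ω ∧ u ≠ 0 ∧
    r = Jone N Ω p₁ p₂ u / Ione N Ω q u}

private lemma rpow_shift_mul {t s : ℝ} (ht : 0 ≤ t) (hs : 1 < s) :
    t ^ (s - 2) * (t * t) = t ^ s := by
  rcases eq_or_lt_of_le ht with h0 | h0
  · rw [show t = 0 from h0.symm]
    simp [Real.zero_rpow (by linarith : s ≠ 0)]
  · have h2 : t * t = t ^ (2 : ℝ) := by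
      rw [show (2:ℝ) = ((2:ℕ):ℝ) by norm_num, Real.rpow_natCast]; ring
    rw [h2, ← Real.rpow_add h0]; norm_num

/-- No `λ ∈ (0, λ₀)` is an eigenvalue of
    `−div((|∇u|^{p₁(x)−2} + |∇u|^{p₂(x)−2})∇u) = λ|u|^{q(x)−2}u` with a `C¹`
    eigenfunction of compact support in `Ω`, in the weak sense tested against all
    `C¹` functions with compact support in `Ω`. -/
theorem stmt15 (N : ℕ) (hN : 3 ≤ N) (Ω : Set (EuclideanSpace ℝ (Fin N)))
    (hΩo : IsOpen Ω) (hΩb : Bornology.IsBounded Ω)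
    (p₁ p₂ q : EuclideanSpace ℝ (Fin N) → ℝ)
    (hp₁ : ContinuousOn p₁ (closure Ω)) (hp₂ : ContinuousOn p₂ (closure Ω))
    (hq : ContinuousOn q (closure Ω))
    (qm qp : ℝ) (hqm : IsLeast (q '' closure Ω) qm)
    (hqp : IsGreatest (q '' closure Ω) qp)
    (hcond : ∀ x ∈ closure Ω, 1 < p₂ x ∧ p₂ x < qm ∧ qp < p₁ x ∧ p₁ x < N) :
    ∀ l : ℝ, 0 < l → ENNReal.ofReal l < lambdaZero N Ω p₁ p₂ q →
      ¬ ∃ u : EuclideanSpace ℝ (Fin N) → ℝ,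
        ContDiff ℝ 1 u ∧ HasCompactSupport u ∧ tsupport u ⊆ Ω ∧ u ≠ 0 ∧
        ∀ v : EuclideanSpace ℝ (Fin N) → ℝ,
          ContDiff ℝ 1 v → HasCompactSupport v → tsupport v ⊆ Ω →
          ∫ x in Ω, (‖gradient u x‖ ^ (p₁ x - 2) + ‖gradient u x‖ ^ (p₂ x - 2)) *
              (inner ℝ (gradient u x) (gradient v x) : ℝ) =
            l * ∫ x in Ω, |u x| ^ (q x - 2) * u x * v x := by
  intro l hl hlt
  rintro ⟨u, hu, hcs, hsupp, hune, hweak⟩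
  have hΩm : MeasurableSet Ω := hΩo.measurableSet
  have hfin : volume Ω < ⊤ := hΩb.measure_lt_top
  have instFin : IsFiniteMeasure (volume.restrict Ω) :=
    ⟨by rwa [Measure.restrict_apply_univ]⟩
  -- exponent bounds on Ω
  have hqmem : ∀ x ∈ Ω, qm ≤ q x ∧ q x ≤ qp := fun x hx =>
    ⟨hqm.2 ⟨x, subset_closure hx, rfl⟩, hqp.2 ⟨x, subset_closure hx, rfl⟩⟩
  -- nonzero point
  obtain ⟨x₀, hux₀⟩ : ∃ x₀, u x₀ ≠ 0 := Function.ne_iff.mp hune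
  have hx₀Ω : x₀ ∈ Ω := hsupp (subset_tsupport u (by simpa using hux₀))
  have hqm1 : (1:ℝ) < qm :=
    (hcond x₀ (subset_closure hx₀Ω)).1.trans (hcond x₀ (subset_closure hx₀Ω)).2.1
  have hqp0 : (0:ℝ) ≤ qp := by
    have := hqmem x₀ hx₀Ω; linarith [this.1, this.2]
  -- exponents for p₁, p₂
  have hp₁gt1 : ∀ x ∈ Ω, 1 < p₁ x := fun x hx => by
    obtain ⟨h1, h2, h3, h4⟩ := hcond x (subset_closure hx)
    have := hqmem x hx
    linarith
  have hp₂gt1 : ∀ x ∈ Ω, 1 < p₂ x := fun x hx => (hcond x (subset_closure hx)).1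
  have hp₁ltN : ∀ x ∈ Ω, p₁ x ≤ (N:ℝ) := fun x hx =>
    (hcond x (subset_closure hx)).2.2.2.le
  have hp₂ltN : ∀ x ∈ Ω, p₂ x ≤ (N:ℝ) := fun x hx => by
    obtain ⟨h1, h2, h3, h4⟩ := hcond x (subset_closure hx)
    have := hqmem x hx
    linarith
  -- gradient facts
  have hgc : Continuous (gradient u) :=
    (InnerProductSpace.toDual ℝ (EuclideanSpace ℝ (Fin N))).symm.continuous.comp
      (hu.continuous_fderiv one_ne_zero)
  have hgcs : HasCompactSupport (gradient u) :=
    (hcs.fderiv ℝ).comp_left (g := (InnerProductSpace.toDual ℝ (EuclideanSpace ℝ (Fin N))).symm)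
      (map_zero _)
  obtain ⟨M, hM⟩ : ∃ M, ∀ x, ‖gradient u x‖ ≤ M := by
    obtain ⟨M, hM⟩ := hgc.norm.bounded_above_of_compact_support hgcs.norm
    exact ⟨M, fun x => by simpa using hM x⟩
  obtain ⟨M', hM'⟩ : ∃ M', ∀ x, |u x| ≤ M' := by
    obtain ⟨M', hM'⟩ := hu.continuous.norm.bounded_above_of_compact_support hcs.norm
    exact ⟨M', fun x => by simpa [Real.norm_eq_abs] using hM' x⟩
  set g : EuclideanSpace ℝ (Fin N) → ℝ :=
    fun x => ‖gradient u x‖ ^ p₁ x + ‖gradient u x‖ ^ p₂ x with hg_def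
  set G : EuclideanSpace ℝ (Fin N) → ℝ := fun x => |u x| ^ q x with hG_def
  -- weak equation with v = u
  have hEq := hweak u hu hcs hsupp
  -- rewrite the two integrands on Ω
  have hLHS : (∫ x in Ω, (‖gradient u x‖ ^ (p₁ x - 2) + ‖gradient u x‖ ^ (p₂ x - 2)) *
      (inner ℝ (gradient u x) (gradient u x) : ℝ)) = ∫ x in Ω, g x := by
    refine setIntegral_congr_fun hΩm fun x hx => ?_
    have hinner : (inner ℝ (gradient u x) (gradient u x) : ℝ) =
        ‖gradient u x‖ * ‖gradient u x‖ := real_inner_self_eq_norm_mul_norm _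
    rw [hinner, add_mul, rpow_shift_mul (norm_nonneg _) (hp₁gt1 x hx),
      rpow_shift_mul (norm_nonneg _) (hp₂gt1 x hx)]
  have hRHS : (∫ x in Ω, |u x| ^ (q x - 2) * u x * u x) = ∫ x in Ω, G x := by
    refine setIntegral_congr_fun hΩm fun x hx => ?_
    have hq1 : 1 < q x := hqm1.trans_le (hqmem x hx).1
    rw [mul_assoc, ← abs_mul_abs_self (u x), rpow_shift_mul (abs_nonneg _) hq1]
  -- measurability
  have hp₁m : AEMeasurable p₁ (volume.restrict Ω) :=
    (hp₁.mono subset_closure).aemeasurable hΩm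
  have hp₂m : AEMeasurable p₂ (volume.restrict Ω) :=
    (hp₂.mono subset_closure).aemeasurable hΩm
  have hqmeas : AEMeasurable q (volume.restrict Ω) :=
    (hq.mono subset_closure).aemeasurable hΩm
  have hgm : AEMeasurable g (volume.restrict Ω) :=
    (hgc.norm.measurable.aemeasurable.pow hp₁m).add
      (hgc.norm.measurable.aemeasurable.pow hp₂m)
  have hGm : AEMeasurable G (volume.restrict Ω) :=
    (hu.continuous.abs.measurable.aemeasurable).pow hqmeas
  -- integrability
  set B : ℝ := max 1 M with hB_def
  have hB1 : (1:ℝ) ≤ B := le_max_left _ _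
  have hgI : IntegrableOn g Ω := by
    refine Integrable.mono' (integrable_const (2 * B ^ (N:ℝ))) hgm.aestronglyMeasurable ?_
    filter_upwards [ae_restrict_mem hΩm] with x hx
    have hbd : ∀ p : ℝ, 1 < p → p ≤ (N:ℝ) → ‖gradient u x‖ ^ p ≤ B ^ (N:ℝ) := by
      intro p hp1 hpN
      calc ‖gradient u x‖ ^ p ≤ B ^ p :=
            Real.rpow_le_rpow (norm_nonneg _) ((hM x).trans (le_max_right _ _)) (by linarith)
        _ ≤ B ^ (N:ℝ) := Real.rpow_le_rpow_of_exponent_le hB1 hpN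
    have h1 := hbd _ (hp₁gt1 x hx) (hp₁ltN x hx)
    have h2 := hbd _ (hp₂gt1 x hx) (hp₂ltN x hx)
    have hgnn : 0 ≤ g x := add_nonneg (Real.rpow_nonneg (norm_nonneg _) _)
      (Real.rpow_nonneg (norm_nonneg _) _)
    rw [Real.norm_of_nonneg hgnn, hg_def]
    dsimp only
    linarith
  set B' : ℝ := max 1 M' with hB'_def
  have hB'1 : (1:ℝ) ≤ B' := le_max_left _ _
  have hGI : IntegrableOn G Ω := by
    refine Integrable.mono' (integrable_const (B' ^ qp)) hGm.aestronglyMeasurable ?_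
    filter_upwards [ae_restrict_mem hΩm] with x hx
    obtain ⟨hq1, hq2⟩ := hqmem x hx
    have h1 : |u x| ^ q x ≤ B' ^ q x :=
      Real.rpow_le_rpow (abs_nonneg _) ((hM' x).trans (le_max_right _ _)) (by linarith)
    have h2 : B' ^ q x ≤ B' ^ qp := Real.rpow_le_rpow_of_exponent_le hB'1 hq2
    rw [Real.norm_of_nonneg (Real.rpow_nonneg (abs_nonneg _) _)]
    exact h1.trans h2
  -- identify Jone and Ione with the Bochner integrals
  have hJ : Jone N Ω p₁ p₂ u = ENNReal.ofReal (∫ x in Ω, g x) := by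
    rw [Jone]
    rw [ofReal_integral_eq_lintegral_ofReal hgI (Filter.Eventually.of_forall fun x =>
      add_nonneg (Real.rpow_nonneg (norm_nonneg _) _) (Real.rpow_nonneg (norm_nonneg _) _))]
    refine lintegral_congr fun x => ?_
    rw [hg_def]
    exact (ENNReal.ofReal_add (Real.rpow_nonneg (norm_nonneg _) _)
      (Real.rpow_nonneg (norm_nonneg _) _)).symm
  have hIo : Ione N Ω q u = ENNReal.ofReal (∫ x in Ω, G x) := by
    rw [Ione]
    rw [ofReal_integral_eq_lintegral_ofReal hGI (Filter.Eventually.of_forall fun x =>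
      Real.rpow_nonneg (abs_nonneg _) _)]
  -- the key identity
  have hkey : (∫ x in Ω, g x) = l * ∫ x in Ω, G x := by
    rw [← hLHS, hEq, hRHS]
  have hJeq : Jone N Ω p₁ p₂ u = ENNReal.ofReal l * Ione N Ω q u := by
    rw [hJ, hIo, hkey, ENNReal.ofReal_mul hl.le]
  -- Ione is nonzero and finite
  have hI0 : Ione N Ω q u ≠ 0 := by
    rw [Ione]
    set c : ℝ := min (|u x₀| / 2) 1 with hc_def
    have hc0 : 0 < c := lt_min (by positivity) one_pos
    have hc1 : c ≤ 1 := min_le_right _ _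
    have hV : IsOpen ({y | c < |u y|} ∩ Ω) :=
      (isOpen_lt continuous_const hu.continuous.abs).inter hΩo
    have hx₀V : x₀ ∈ {y | c < |u y|} ∩ Ω := by
      refine ⟨?_, hx₀Ω⟩
      have h2 : 0 < |u x₀| := abs_pos.mpr hux₀
      have : c ≤ |u x₀| / 2 := min_le_left _ _
      simp only [Set.mem_setOf_eq]
      linarith
    obtain ⟨r, hr0, hball⟩ := Metric.isOpen_iff.mp hV x₀ hx₀V
    have hpos : (0:ℝ≥0∞) < ∫⁻ x in Ω, ENNReal.ofReal (|u x| ^ q x) := by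
      calc (0:ℝ≥0∞) < ENNReal.ofReal (c ^ qp) * volume (Metric.ball x₀ r) := by
            refine ENNReal.mul_pos
              (ENNReal.ofReal_pos.mpr (Real.rpow_pos_of_pos hc0 _)).ne'
              (Metric.measure_ball_pos volume x₀ hr0).ne'
        _ = ∫⁻ _ in Metric.ball x₀ r, ENNReal.ofReal (c ^ qp) := by
            rw [setLIntegral_const, mul_comm]
        _ ≤ ∫⁻ y in Metric.ball x₀ r, ENNReal.ofReal (|u y| ^ q y) := by
            refine lintegral_mono_ae ?_
            filter_upwards [ae_restrict_mem measurableSet_ball] with y hy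
            obtain ⟨hyc, hyΩ⟩ := hball hy
            obtain ⟨hq1, hq2⟩ := hqmem y hyΩ
            refine ENNReal.ofReal_le_ofReal ?_
            calc c ^ qp ≤ c ^ q y := Real.rpow_le_rpow_of_exponent_ge hc0 hc1 hq2
              _ ≤ |u y| ^ q y := Real.rpow_le_rpow hc0.le (le_of_lt hyc) (by linarith)
        _ ≤ ∫⁻ x in Ω, ENNReal.ofReal (|u x| ^ q x) :=
            lintegral_mono_set fun y hy => (hball hy).2
    exact hpos.ne'
  have hIt : Ione N Ω q u ≠ ⊤ := by rw [hIo]; exact ENNReal.ofReal_ne_top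
  -- conclude
  have hmem : Jone N Ω p₁ p₂ u / Ione N Ω q u ∈
      {r : ℝ≥0∞ | ∃ w : EuclideanSpace ℝ (Fin N) → ℝ,
        ContDiff ℝ 1 w ∧ HasCompactSupport w ∧ tsupport w ⊆ Ω ∧ w ≠ 0 ∧
        r = Jone N Ω p₁ p₂ w / Ione N Ω q w} := ⟨u, hu, hcs, hsupp, hune, rfl⟩
  have hle : lambdaZero N Ω p₁ p₂ q ≤ ENNReal.ofReal l := by
    have h := sInf_le hmem
    rwa [hJeq, mul_div_assoc, ENNReal.div_self hI0 hIt, mul_one] at h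
  exact absurd hlt (not_lt.mpr hle)
end
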